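/- The function I₄ = 2x₄⁴ + (4x₅²+4x₆²−2)x₄² + 2x₅⁴ + 2x₆⁴ + 2x₃²x₆² − 2x₆² + 4x₂x₃x₅x₆ + 2x₅²(x₂²+2x₆²−1) + 1 is a first integral of the vector field X: its directional derivative along X vanishes at every point with x₁²+…+x₆² = 1. -/

import Mathlib

theorem stmt7 (x₁ x₂ x₃ x₄ x₅ x₆ : ℝ)
    (X₁ X₂ X₃ X₄ X₅ X₆ : ℝ)
    (hX₁ : X₁ = x₂ * (x₁^2 - x₄^2))
    (hX₂ : X₂ = -x₁^3 + (x₃^2 + x₄^2 + x₅^2) * x₁ + 2 * x₃ * x₄ * x₅)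
    (hX₃ : X₃ = (x₃ * x₄ + x₁ * x₅) * x₆ - x₂ * (x₁ * x₃ + x₄ * x₅))
    (hX₄ : X₄ = (x₁^2 - x₄^2) * x₆)
    (hX₅ : X₅ = (x₁ * x₃ + x₄ * x₅) * x₆ - x₂ * (x₃ * x₄ + x₁ * x₅))
    (hX₆ : X₆ = 2 * x₄^3 + (x₂^2 + x₆^2 - 1) * x₄ - 2 * x₁ * x₃ * x₅)
    (h : x₁^2 + x₂^2 + x₃^2 + x₄^2 + x₅^2 + x₆^2 = 1) :
    deriv (fun t : ℝ =>
      2 * (x₄ + t * X₄)^4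
      + (4 * (x₅ + t * X₅)^2 + 4 * (x₆ + t * X₆)^2 - 2) * (x₄ + t * X₄)^2
      + 2 * (x₅ + t * X₅)^4 + 2 * (x₆ + t * X₆)^4
      + 2 * (x₃ + t * X₃)^2 * (x₆ + t * X₆)^2 - 2 * (x₆ + t * X₆)^2
      + 4 * (x₂ + t * X₂) * (x₃ + t * X₃) * (x₅ + t * X₅) * (x₆ + t * X₆)
      + 2 * (x₅ + t * X₅)^2 * ((x₂ + t * X₂)^2 + 2 * (x₆ + t * X₆)^2 - 1) + 1) 0 = 0 :=  by
  have hu₂ : HasDerivAt (fun t : ℝ => x₂ + t * X₂) X₂ 0 := by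
    simpa using ((hasDerivAt_id (0:ℝ)).mul_const X₂).const_add x₂
  have hu₃ : HasDerivAt (fun t : ℝ => x₃ + t * X₃) X₃ 0 := by
    simpa using ((hasDerivAt_id (0:ℝ)).mul_const X₃).const_add x₃
  have hu₄ : HasDerivAt (fun t : ℝ => x₄ + t * X₄) X₄ 0 := by
    simpa using ((hasDerivAt_id (0:ℝ)).mul_const X₄).const_add x₄
  have hu₅ : HasDerivAt (fun t : ℝ => x₅ + t * X₅) X₅ 0 := by
    simpa using ((hasDerivAt_id (0:ℝ)).mul_const X₅).const_add x₅
  have hu₆ : HasDerivAt (fun t : ℝ => x₆ + t * X₆) X₆ 0 := by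
    simpa using ((hasDerivAt_id (0:ℝ)).mul_const X₆).const_add x₆
  have key :=
    (((((((((hu₄.pow 4).const_mul 2).add
      (((((hu₅.pow 2).const_mul 4).add ((hu₆.pow 2).const_mul 4)).sub_const 2).mul
        (hu₄.pow 2))).add
      ((hu₅.pow 4).const_mul 2)).add
      ((hu₆.pow 4).const_mul 2)).add
      (((hu₃.pow 2).const_mul 2).mul (hu₆.pow 2))).sub
      ((hu₆.pow 2).const_mul 2)).add
      ((((hu₂.const_mul 4).mul hu₃).mul hu₅).mul hu₆)).add
      (((hu₅.pow 2).const_mul 2).mul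
        (((hu₂.pow 2).add ((hu₆.pow 2).const_mul 2)).sub_const 1))).add_const 1
  have hd := key.deriv
  beta_reduce at hd
  simp only [Pi.pow_apply, Pi.mul_apply, Pi.add_apply, Pi.sub_apply] at hd
  rw [hd]
  subst hX₁ hX₂ hX₃ hX₄ hX₅ hX₆
  linear_combination ((-4)*x₄*x₆ + 8*x₄*x₆^3 + 8*x₄*x₅^2*x₆ + 8*x₄^3*x₆
    + (-4)*x₁*x₃*x₅*x₆ + (-4)*x₁*x₂*x₅^2) * h
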